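/- Under Assumption A, let {x^k} with parameters {γ_k} be generated by the monotone proximal gradient method, and let {x^k}_{k∈K} be a subsequence converging to some point x*. Then γ_k ‖x^{k+1} − x^k‖ → 0 along k ∈ K. (Proposition 3.4.) -/

import Mathlib

open Filter Topology RealInnerProductSpace

noncomputable section

variable {E : Type*} [NormedAddCommGroup E] [InnerProductSpace ℝ E] [FiniteDimensional ℝ E]

/-- The objective `ψ = f + φ`, with values in `EReal`. -/
def psi (f : E → ℝ) (φ : E → EReal) (x : E) : EReal :=
  (f x : EReal) + φ x

/-- `φ` is bounded from below by an affine function. -/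
def AffineBoundedBelow (φ : E → EReal) : Prop :=
  ∃ (a : E) (b : ℝ), ∀ x : E, ((⟪a, x⟫ + b : ℝ) : EReal) ≤ φ x

/-- Objective of the proximal subproblem at `xb` with parameter `γ`. -/
def proxObj (f : E → ℝ) (φ : E → EReal) (xb : E) (γ : ℝ) (x : E) : EReal :=
  ((f xb + ⟪gradient f xb, x - xb⟫ + γ / 2 * ‖x - xb‖ ^ 2 : ℝ) : EReal) + φ x

/-- `x` is a global minimizer of the proximal subproblem at `xb` with parameter `γ`. -/
def IsProxMin (f : E → ℝ) (φ : E → EReal) (xb : E) (γ : ℝ) (x : E) : Prop :=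
  ∀ y : E, proxObj f φ xb γ x ≤ proxObj f φ xb γ y

/-- Fréchet (regular) subdifferential of `φ` at `x`. -/
def FrechetSubdiff (φ : E → EReal) (x : E) : Set E :=
  {η : E | ∀ ε : ℝ, 0 < ε →
    ∀ᶠ y in 𝓝[≠] x, φ x + ((⟪η, y - x⟫ - ε * ‖y - x‖ : ℝ) : EReal) ≤ φ y}

/-- Limiting (Mordukhovich) subdifferential of `φ` at `x`. -/
def LimitingSubdiff (φ : E → EReal) (x : E) : Set E :=
  {η : E | ∃ u v : ℕ → E,
    Tendsto u atTop (𝓝 x) ∧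
    Tendsto (fun j => φ (u j)) atTop (𝓝 (φ x)) ∧
    Tendsto v atTop (𝓝 η) ∧
    ∀ j : ℕ, v j ∈ FrechetSubdiff φ (u j)}

/-- `x` is an M-stationary point of `min f + φ`. -/
def MStationary (f : E → ℝ) (φ : E → EReal) (x : E) : Prop :=
  φ x ≠ ⊤ ∧ -gradient f x ∈ LimitingSubdiff φ x

/-- `ψ` is bounded from below on `dom φ`. -/
def PsiBddBelow (f : E → ℝ) (φ : E → EReal) : Prop :=
  ∃ c : ℝ, ∀ z : E, φ z ≠ ⊤ → (c : EReal) ≤ psi f φ z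

/-- The monotone proximal gradient method (Algorithm 3.1). -/
structure MonoPG (f : E → ℝ) (φ : E → EReal) (τ γmin γmax δ : ℝ)
    (x : ℕ → E) (γ : ℕ → ℝ) : Prop where
  dom : ∀ k : ℕ, φ (x k) ≠ ⊤
  stepsize : ∀ k : ℕ, ∃ γ0 : ℝ, ∃ i : ℕ, γ0 ∈ Set.Icc γmin γmax ∧ γ k = τ ^ i * γ0 ∧
    (1 ≤ i → ∃ xh : E, IsProxMin f φ (x k) (γ k / τ) xh ∧
      psi f φ (x k) < psi f φ xh + ((δ * (γ k / τ) / 2 * ‖xh - x k‖ ^ 2 : ℝ) : EReal))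
  isMin : ∀ k : ℕ, IsProxMin f φ (x k) (γ k) (x (k + 1))
  accept : ∀ k : ℕ,
    psi f φ (x (k + 1)) + ((δ * γ k / 2 * ‖x (k + 1) - x k‖ ^ 2 : ℝ) : EReal) ≤ psi f φ (x k)

/-- The nonmonotone reference value `max_{j=0,…,min{k,m}} ψ(x^{k-j})`. -/
def nmax (f : E → ℝ) (φ : E → EReal) (x : ℕ → E) (m k : ℕ) : EReal :=
  (Finset.range (min k m + 1)).sup fun j => psi f φ (x (k - j))

/-- The nonmonotone proximal gradient method (Algorithm 4.1). -/
structure NonmonoPG (f : E → ℝ) (φ : E → EReal) (τ γmin γmax δ : ℝ) (m : ℕ)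
    (x : ℕ → E) (γ : ℕ → ℝ) : Prop where
  dom : ∀ k : ℕ, φ (x k) ≠ ⊤
  stepsize : ∀ k : ℕ, ∃ γ0 : ℝ, ∃ i : ℕ, γ0 ∈ Set.Icc γmin γmax ∧ γ k = τ ^ i * γ0 ∧
    (1 ≤ i → ∃ xh : E, IsProxMin f φ (x k) (γ k / τ) xh ∧
      nmax f φ x m k < psi f φ xh + ((δ * (γ k / τ) / 2 * ‖xh - x k‖ ^ 2 : ℝ) : EReal))
  isMin : ∀ k : ℕ, IsProxMin f φ (x k) (γ k) (x (k + 1))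
  accept : ∀ k : ℕ,
    psi f φ (x (k + 1)) + ((δ * γ k / 2 * ‖x (k + 1) - x k‖ ^ 2 : ℝ) : EReal) ≤ nmax f φ x m k

/-- `l` realizes the nonmonotone maximum `ψ(x^{l(k)}) = max_{j=0,…,m_k} ψ(x^{k-j})`,
with `l k ∈ {k - m_k, …, k}`. -/
def RealizesNMax (f : E → ℝ) (φ : E → EReal) (x : ℕ → E) (m : ℕ) (l : ℕ → ℕ) : Prop :=
  ∀ k : ℕ, k - min k m ≤ l k ∧ l k ≤ k ∧ psi f φ (x (l k)) = nmax f φ x m k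

/-- `ψ` is uniformly continuous on the sublevel set `L_ψ(x⁰)`. -/
def UnifContOnLevelSet (f : E → ℝ) (φ : E → EReal) (x0 : E) : Prop :=
  ∀ ε : ℝ, 0 < ε → ∃ η : ℝ, 0 < η ∧ ∀ u v : E,
    psi f φ u ≤ psi f φ x0 → psi f φ v ≤ psi f φ x0 → ‖u - v‖ ≤ η →
    psi f φ u ≤ psi f φ v + (ε : EReal)

/-- `φ` is continuous on its domain `dom φ`. -/
def ContOnDom (φ : E → EReal) : Prop :=
  ∀ x : E, φ x ≠ ⊤ → ∀ y : ℕ → E, (∀ j : ℕ, φ (y j) ≠ ⊤) →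
    Tendsto y atTop (𝓝 x) → Tendsto (fun j => φ (y j)) atTop (𝓝 (φ x))


set_option linter.unusedSectionVars false
section Helpers

variable {f : E → ℝ} {φ : E → EReal}

lemma psi_coe (f : E → ℝ) (hbot : ∀ z : E, φ z ≠ ⊥) {z : E} (hz : φ z ≠ ⊤) :
    psi f φ z = ((f z + (φ z).toReal : ℝ) : EReal) := by
  rw [psi, EReal.coe_add, EReal.coe_toReal hz (hbot z)]

lemma prox_min_real (hbot : ∀ z : E, φ z ≠ ⊥)
    {xb w : E} {c : ℝ} (h : IsProxMin f φ xb c w) {y : E} (hy : φ y ≠ ⊤) :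
    φ w ≠ ⊤ ∧
      ⟪gradient f xb, w - xb⟫ + c / 2 * ‖w - xb‖ ^ 2 + (φ w).toReal ≤
      ⟪gradient f xb, y - xb⟫ + c / 2 * ‖y - xb‖ ^ 2 + (φ y).toReal := by
  have h1 := h y
  rw [proxObj, proxObj, ← EReal.coe_toReal hy (hbot y), ← EReal.coe_add] at h1
  have hwt : φ w ≠ ⊤ := by
    intro hw
    rw [hw, EReal.coe_add_top, top_le_iff] at h1
    exact EReal.coe_ne_top _ h1
  rw [← EReal.coe_toReal hwt (hbot w), ← EReal.coe_add, EReal.coe_le_coe_iff] at h1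
  exact ⟨hwt, by linarith⟩

lemma MonoPG.gamma_ge {τ γmin γmax δ : ℝ} {x : ℕ → E} {γ : ℕ → ℝ}
    (hM : MonoPG f φ τ γmin γmax δ x γ) (hτ : 1 < τ) (hγmin : 0 < γmin) (k : ℕ) :
    γmin ≤ γ k := by
  obtain ⟨γ0, i, hγ0, hγeq, -⟩ := hM.stepsize k
  have h1 : (1:ℝ) ≤ τ ^ i := one_le_pow₀ hτ.le
  nlinarith [hγ0.1, hγ0.2]

end Helpers

set_option maxHeartbeats 1000000 in
/-- Proposition 3.4: under Assumption A, if a subsequence `x^k`, `k ∈ K`, of iterates of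
the monotone proximal gradient method converges to `xstar`, then
`γ_k ‖x^{k+1} - x^k‖ → 0` along `k ∈ K`. -/
theorem stmt_6
    (f : E → ℝ) (φ : E → EReal) (hf : ContDiff ℝ 1 f)
    (hbot : ∀ z : E, φ z ≠ ⊥) (hlsc : LowerSemicontinuous φ)
    (τ γmin γmax δ : ℝ) (hτ : 1 < τ) (hγmin : 0 < γmin) (hγmm : γmin ≤ γmax)
    (hδ : δ ∈ Set.Ioo (0 : ℝ) 1)
    (x : ℕ → E) (γ : ℕ → ℝ)
    (hpsibdd : PsiBddBelow f φ) (haff : AffineBoundedBelow φ)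
    (hM : MonoPG f φ τ γmin γmax δ x γ)
    (K : ℕ → ℕ) (hK : StrictMono K) (xstar : E)
    (hconv : Tendsto (fun n => x (K n)) atTop (𝓝 xstar)) :
    Tendsto (fun n => γ (K n) * ‖x (K n + 1) - x (K n)‖) atTop (𝓝 0) := by
  classical
  obtain ⟨hδ0, hδ1⟩ := hδ
  have hτ0 : (0:ℝ) < τ := lt_trans one_pos hτ
  have hγge : ∀ k, γmin ≤ γ k := hM.gamma_ge hτ hγmin
  have hγpos : ∀ k, 0 < γ k := fun k => lt_of_lt_of_le hγmin (hγge k)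
  have hdiff : Differentiable ℝ f := hf.differentiable one_ne_zero
  have hgradcont : Continuous (fun z : E => gradient f z) := by
    exact ((InnerProductSpace.toDual ℝ E).symm.continuous).comp (hf.continuous_fderiv one_ne_zero)
  have hnormg : ∀ z w : E, ‖fderiv ℝ f z - fderiv ℝ f w‖ = ‖gradient f z - gradient f w‖ := by
    intro z w
    rw [show gradient f z - gradient f w
        = (InnerProductSpace.toDual ℝ E).symm (fderiv ℝ f z - fderiv ℝ f w) by
      rw [map_sub]; rfl, LinearIsometryEquiv.norm_map]
  -- real-valued objective sequence
  set sR : ℕ → ℝ := fun k => f (x k) + (φ (x k)).toReal with hsRdef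
  have hpsis : ∀ k, psi f φ (x k) = ((sR k : ℝ) : EReal) := fun k => psi_coe f hbot (hM.dom k)
  have hacc : ∀ k, sR (k+1) + δ * γ k / 2 * ‖x (k+1) - x k‖ ^ 2 ≤ sR k := by
    intro k
    have h1 := hM.accept k
    rw [hpsis, hpsis, ← EReal.coe_add, EReal.coe_le_coe_iff] at h1
    linarith
  have hanti : Antitone sR := antitone_nat_of_succ_le fun k =>
    (le_add_of_nonneg_right
      (mul_nonneg (div_nonneg (mul_nonneg hδ0.le (hγpos k).le) (by norm_num))
        (sq_nonneg ‖x (k+1) - x k‖))).trans (hacc k)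
  obtain ⟨c, hc⟩ := hpsibdd
  have hlb : ∀ k, c ≤ sR k := by
    intro k
    have := hc (x k) (hM.dom k)
    rwa [hpsis k, EReal.coe_le_coe_iff] at this
  -- Step 1: γ_k ‖d_k‖² → 0 along the whole sequence
  have hstep1 : Tendsto (fun k => γ k * ‖x (k+1) - x k‖ ^ 2) atTop (𝓝 0) := by
    have hlim : Tendsto sR atTop (𝓝 (⨅ k, sR k)) :=
      tendsto_atTop_ciInf hanti ⟨c, fun r ⟨k, hk⟩ => hk ▸ hlb k⟩
    have hdiff0 : Tendsto (fun k => sR k - sR (k+1)) atTop (𝓝 0) := by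
      have := hlim.sub (hlim.comp (tendsto_add_atTop_nat 1))
      simpa using this
    have hsq : Tendsto (fun k => δ * γ k / 2 * ‖x (k+1) - x k‖ ^ 2) atTop (𝓝 0) :=
      squeeze_zero (fun k =>
          mul_nonneg (div_nonneg (mul_nonneg hδ0.le (hγpos k).le) (by norm_num)) (sq_nonneg _))
        (fun k => by linarith [hacc k]) hdiff0
    have heq : (fun k => γ k * ‖x (k+1) - x k‖ ^ 2)
        = fun k => (2/δ) * (δ * γ k / 2 * ‖x (k+1) - x k‖ ^ 2) := by
      funext k; field_simp
    rw [heq]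
    simpa using hsq.const_mul (2/δ)
  by_contra hcon
  rw [Metric.tendsto_atTop] at hcon
  push_neg at hcon
  obtain ⟨ε, hε, hfreq⟩ := hcon
  have hfreq' : ∃ᶠ n in atTop, ε ≤ γ (K n) * ‖x (K n + 1) - x (K n)‖ := by
    rw [frequently_atTop]
    intro N
    obtain ⟨n, hn1, hn2⟩ := hfreq N
    refine ⟨n, hn1, ?_⟩
    have h0 : 0 ≤ γ (K n) * ‖x (K n + 1) - x (K n)‖ :=
      mul_nonneg (hγpos _).le (norm_nonneg _)
    rwa [Real.dist_eq, sub_zero, abs_of_nonneg h0] at hn2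
  obtain ⟨e, he, hee⟩ := Filter.extraction_of_frequently_atTop hfreq'
  set L : ℕ → ℕ := fun n => K (e n) with hLdef
  have hLtop : Tendsto L atTop atTop := (hK.comp he).tendsto_atTop
  set d : ℕ → E := fun n => x (L n + 1) - x (L n) with hddef
  have h1 : ∀ n, ε ≤ γ (L n) * ‖d n‖ := hee
  have h2 : Tendsto (fun n => γ (L n) * ‖d n‖ ^ 2) atTop (𝓝 0) := hstep1.comp hLtop
  have h3 : Tendsto (fun n => x (L n)) atTop (𝓝 xstar) := hconv.comp he.tendsto_atTop
  have hdpos : ∀ n, 0 < ‖d n‖ := by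
    intro n
    rcases (norm_nonneg (d n)).eq_or_lt with h | h
    · exfalso
      have := h1 n
      rw [← h, mul_zero] at this
      linarith
    · exact h
  have h4 : Tendsto (fun n => ‖d n‖) atTop (𝓝 0) := by
    refine squeeze_zero (g := fun n => γ (L n) * ‖d n‖ ^ 2 / ε) (fun n => norm_nonneg _)
      (fun n => ?_) (by simpa using h2.div_const ε)
    rw [le_div_iff₀ hε]
    nlinarith [h1 n, norm_nonneg (d n), (hγpos (L n)).le]
  have h5 : Tendsto (fun n => γ (L n)) atTop atTop := by
    refine tendsto_atTop_mono (f := fun n => ε * (‖d n‖)⁻¹) (fun n => ?_) ?_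
    · show ε * (‖d n‖)⁻¹ ≤ γ (L n)
      rw [← div_eq_mul_inv, div_le_iff₀ (hdpos n)]
      exact h1 n
    · refine Tendsto.const_mul_atTop hε ?_
      exact tendsto_inv_nhdsGT_zero.comp
        (tendsto_nhdsWithin_of_tendsto_nhds_of_eventually_within _ h4
          (Eventually.of_forall fun n => hdpos n))
  -- construction of the auxiliary minimizers x̂
  set Q : ℕ → E → Prop := fun n w => IsProxMin f φ (x (L n)) (γ (L n) / τ) w ∧
      psi f φ (x (L n)) < psi f φ w
        + ((δ * (γ (L n) / τ) / 2 * ‖w - x (L n)‖ ^ 2 : ℝ) : EReal) with hQdef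
  have hQ : ∀ᶠ n in atTop, ∃ w, Q n w := by
    filter_upwards [h5.eventually_gt_atTop γmax] with n hn
    obtain ⟨γ0, i, hγ0, hγeq, hfail⟩ := hM.stepsize (L n)
    have hi : 1 ≤ i := by
      by_contra hi0
      push_neg at hi0
      rw [Nat.lt_one_iff.1 hi0, pow_zero, one_mul] at hγeq
      rw [hγeq] at hn
      linarith [hγ0.2]
    exact hfail hi
  have hQall : ∀ n, ∃ w, ((∃ v, Q n v) → Q n w) := by
    intro n
    by_cases h : ∃ v, Q n v
    · exact ⟨h.choose, fun _ => h.choose_spec⟩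
    · exact ⟨x (L n), fun hcc => absurd hcc h⟩
  choose xh hxh using hQall
  have hxhQ : ∀ᶠ n in atTop, Q n (xh n) := hQ.mono fun n hn => hxh n hn
  set dh : ℕ → E := fun n => xh n - x (L n) with hdhdef
  set γh : ℕ → ℝ := fun n => γ (L n) / τ with hγhdef
  have hγhpos : ∀ n, 0 < γh n := fun n => div_pos (hγpos _) hτ0
  have hγhtop : Tendsto γh atTop atTop := h5.atTop_div_const hτ0
  -- (c1): basic inequality from the auxiliary prox subproblem
  have hkey1 : ∀ᶠ n in atTop, φ (xh n) ≠ ⊤ ∧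
      ⟪gradient f (x (L n)), dh n⟫ + γh n / 2 * ‖dh n‖ ^ 2 + (φ (xh n)).toReal
        ≤ (φ (x (L n))).toReal := by
    filter_upwards [hxhQ] with n hn
    obtain ⟨hT, hineq⟩ := prox_min_real hbot hn.1 (hM.dom (L n))
    refine ⟨hT, ?_⟩
    simpa only [sub_self, inner_zero_right, norm_zero, ne_eq, OfNat.ofNat_ne_zero,
      not_false_eq_true, zero_pow, mul_zero, zero_add] using hineq
  -- (c2): ‖d n‖ ≤ ‖dh n‖
  have hc2 : ∀ᶠ n in atTop, ‖d n‖ ≤ ‖dh n‖ := by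
    filter_upwards [hxhQ, hkey1] with n hn hk1
    have hm1 := (prox_min_real hbot (hM.isMin (L n)) hk1.1).2
    have hm2 := (prox_min_real hbot hn.1 (hM.dom (L n + 1))).2
    have hlt : γ (L n) / τ < γ (L n) := div_lt_self (hγpos _) hτ
    have hsq : ‖d n‖ ^ 2 ≤ ‖dh n‖ ^ 2 := by nlinarith [hm1, hm2]
    have := Real.sqrt_le_sqrt hsq
    rwa [Real.sqrt_sq (norm_nonneg _), Real.sqrt_sq (norm_nonneg _)] at this
  -- affine lower bound in real form
  obtain ⟨a, b, haffb⟩ := haff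
  have haffr : ∀ z : E, φ z ≠ ⊤ → ⟪a, z⟫ + b ≤ (φ z).toReal := by
    intro z hz
    have := haffb z
    rwa [← EReal.coe_toReal hz (hbot z), EReal.coe_le_coe_iff] at this
  -- (c3): ‖dh n‖ → 0
  have hc3 : Tendsto (fun n => ‖dh n‖) atTop (𝓝 0) := by
    rw [NormedAddCommGroup.tendsto_nhds_zero]
    intro ρ hρ
    set C : ℝ := sR 0 - f xstar + 1 - ⟪a, xstar⟫ + 1 - b with hCdef
    set C' : ℝ := ‖a‖ + ‖gradient f xstar‖ + 1 with hC'def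
    have hE1 : ∀ᶠ n in atTop, f xstar - 1 ≤ f (x (L n)) :=
      ((hf.continuous.tendsto xstar).comp h3).eventually (eventually_ge_nhds (by linarith))
    have hE2 : ∀ᶠ n in atTop, ⟪a, xstar⟫ - 1 ≤ ⟪a, x (L n)⟫ := by
      have hcont : Continuous (fun z : E => ⟪a, z⟫) := continuous_const.inner continuous_id
      exact ((hcont.tendsto xstar).comp h3).eventually (eventually_ge_nhds (by linarith))
    have hE3 : ∀ᶠ n in atTop, ‖gradient f (x (L n))‖ ≤ ‖gradient f xstar‖ + 1 := by
      have hcont : Continuous (fun z : E => ‖gradient f z‖) := hgradcont.norm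
      exact ((hcont.tendsto xstar).comp h3).eventually (eventually_le_nhds (by linarith))
    have hE4 : ∀ᶠ n in atTop, 2 * (|C| / ρ + |C'|) / ρ < γh n :=
      hγhtop.eventually_gt_atTop _
    filter_upwards [hE1, hE2, hE3, hE4, hkey1] with n he1 he2 he3 he4 hk1
    rw [Real.norm_eq_abs, abs_of_nonneg (norm_nonneg _)]
    by_contra hge
    push_neg at hge
    -- main estimate: γh/2 ‖dh‖² ≤ C + C' ‖dh‖
    have hq : ⟪a, x (L n)⟫ + ⟪a, dh n⟫ + b ≤ (φ (xh n)).toReal := by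
      have hiq := haffr (xh n) hk1.1
      have hsplit : ⟪a, dh n⟫ = ⟪a, xh n⟫ - ⟪a, x (L n)⟫ := by
        simp [hdhdef, inner_sub_right]
      linarith
    have hp : (φ (x (L n))).toReal ≤ sR 0 - f (x (L n)) := by
      have h' : sR (L n) ≤ sR 0 := hanti (Nat.zero_le _)
      have h'' : sR (L n) = f (x (L n)) + (φ (x (L n))).toReal := rfl
      linarith
    have hia : |⟪a, dh n⟫| ≤ ‖a‖ * ‖dh n‖ := abs_real_inner_le_norm a (dh n)
    have hig : |⟪gradient f (x (L n)), dh n⟫| ≤ ‖gradient f (x (L n))‖ * ‖dh n‖ :=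
      abs_real_inner_le_norm _ _
    have hmain : γh n / 2 * ‖dh n‖ ^ 2 ≤ C + C' * ‖dh n‖ := by
      have h0 := hk1.2
      have hb1 : -(‖a‖ * ‖dh n‖) ≤ ⟪a, dh n⟫ := neg_le_of_abs_le hia
      have hb2 : -(‖gradient f (x (L n))‖ * ‖dh n‖) ≤ ⟪gradient f (x (L n)), dh n⟫ :=
        neg_le_of_abs_le hig
      have hgn2 : ‖gradient f (x (L n))‖ * ‖dh n‖
          ≤ ‖gradient f xstar‖ * ‖dh n‖ + ‖dh n‖ := by
        nlinarith [norm_nonneg (dh n), he3]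
      have hC'eq : C' * ‖dh n‖ = ‖a‖ * ‖dh n‖ + ‖gradient f xstar‖ * ‖dh n‖ + ‖dh n‖ := by
        rw [hC'def]; ring
      linarith [h0, hq, hp, he1, he2, hb1, hb2, hgn2, hC'eq.le, hC'eq.ge, hCdef.le, hCdef.ge]
    -- contradiction with γh large
    have hd1 : ρ ≤ ‖dh n‖ := hge
    have hdn : 0 < ‖dh n‖ := lt_of_lt_of_le hρ hd1
    have k1 : C ≤ |C| / ρ * ‖dh n‖ := by
      have h1' : (1:ℝ) ≤ ‖dh n‖ / ρ := (one_le_div hρ).2 hd1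
      calc C ≤ |C| := le_abs_self C
        _ ≤ |C| * (‖dh n‖ / ρ) := le_mul_of_one_le_right (abs_nonneg C) h1'
        _ = |C| / ρ * ‖dh n‖ := by ring
    have k2 : C' * ‖dh n‖ ≤ |C'| * ‖dh n‖ :=
      mul_le_mul_of_nonneg_right (le_abs_self _) (norm_nonneg _)
    have k3 : ρ * ‖dh n‖ ≤ ‖dh n‖ ^ 2 := by nlinarith [norm_nonneg (dh n)]
    have k3' : γh n / 2 * (ρ * ‖dh n‖) ≤ γh n / 2 * ‖dh n‖ ^ 2 :=
      mul_le_mul_of_nonneg_left k3 (by linarith [hγhpos n])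
    have k4' : (γh n / 2 * ρ) * ‖dh n‖ ≤ (|C| / ρ + |C'|) * ‖dh n‖ := by
      nlinarith [hmain, k1, k2, k3']
    have k5 : γh n / 2 * ρ ≤ |C| / ρ + |C'| := le_of_mul_le_mul_right k4' hdn
    rw [div_lt_iff₀ hρ] at he4
    nlinarith [k5]
  -- (c4): γh n ‖dh n‖ → 0
  have hc4 : Tendsto (fun n => γh n * ‖dh n‖) atTop (𝓝 0) := by
    rw [NormedAddCommGroup.tendsto_nhds_zero]
    intro ρ hρ
    set ρ' : ℝ := (1 - δ) * ρ / 4 with hρ'def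
    have hρ'pos : 0 < ρ' := by
      have : 0 < 1 - δ := by linarith
      positivity
    obtain ⟨η, hη, hball⟩ := Metric.continuousAt_iff.1 (hgradcont.continuousAt (x := xstar))
      (ρ'/2) (by positivity)
    have hEx : ∀ᶠ n in atTop, dist (x (L n)) xstar < η / 2 :=
      (Metric.tendsto_nhds.1 h3) (η/2) (by positivity)
    have hEd : ∀ᶠ n in atTop, ‖dh n‖ < η / 2 := by
      have := (Metric.tendsto_nhds.1 hc3) (η/2) (by positivity)
      filter_upwards [this] with n hn
      rwa [Real.dist_eq, sub_zero, abs_of_nonneg (norm_nonneg _)] at hn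
    filter_upwards [hEx, hEd, hkey1, hxhQ] with n hex hed hk1 hq
    rw [Real.norm_eq_abs, abs_of_nonneg (mul_nonneg (hγhpos n).le (norm_nonneg _))]
    rcases (norm_nonneg (dh n)).eq_or_lt with hd0 | hd0
    · rw [← hd0, mul_zero]; exact hρ
    -- mean value estimate on the ball B(xstar, η)
    have hxin : x (L n) ∈ Metric.ball xstar η := by
      rw [Metric.mem_ball]
      linarith [hex]
    have hxhin : xh n ∈ Metric.ball xstar η := by
      rw [Metric.mem_ball]
      calc dist (xh n) xstar ≤ dist (xh n) (x (L n)) + dist (x (L n)) xstar := dist_triangle _ _ _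
        _ < η := by
          rw [dist_eq_norm, show xh n - x (L n) = dh n from rfl]
          linarith
    have hbound : ∀ z ∈ Metric.ball xstar η, ‖fderiv ℝ f z - fderiv ℝ f (x (L n))‖ ≤ ρ' := by
      intro z hz
      rw [hnormg]
      have t1 : dist (gradient f z) (gradient f xstar) < ρ'/2 := hball (Metric.mem_ball.1 hz)
      have t2 : dist (gradient f (x (L n))) (gradient f xstar) < ρ'/2 := hball (Metric.mem_ball.1 hxin)
      calc ‖gradient f z - gradient f (x (L n))‖
          ≤ dist (gradient f z) (gradient f xstar)
            + dist (gradient f xstar) (gradient f (x (L n))) := by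
            rw [← dist_eq_norm]; exact dist_triangle _ _ _
        _ ≤ ρ' := by rw [dist_comm (gradient f xstar)]; linarith
    have hmvt := (convex_ball xstar η).norm_image_sub_le_of_norm_hasFDerivWithin_le'
      (fun z _ => (hdiff z).hasFDerivAt.hasFDerivWithinAt) hbound hxin hxhin
    have hfd : (fderiv ℝ f (x (L n))) (xh n - x (L n)) = ⟪gradient f (x (L n)), dh n⟫ :=
      (InnerProductSpace.toDual_symm_apply).symm
    rw [hfd] at hmvt
    have hmvt' : f (xh n) - f (x (L n)) - ⟪gradient f (x (L n)), dh n⟫ ≤ ρ' * ‖dh n‖ := by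
      calc f (xh n) - f (x (L n)) - ⟪gradient f (x (L n)), dh n⟫
          ≤ |f (xh n) - f (x (L n)) - ⟪gradient f (x (L n)), dh n⟫| := le_abs_self _
        _ ≤ ρ' * ‖xh n - x (L n)‖ := by rw [← Real.norm_eq_abs]; exact hmvt
        _ = ρ' * ‖dh n‖ := rfl
    -- failure inequality in real form
    have hfailr : f (x (L n)) + (φ (x (L n))).toReal
        < f (xh n) + (φ (xh n)).toReal + δ * γh n / 2 * ‖dh n‖ ^ 2 := by
      have h0 := hq.2
      rw [psi_coe f hbot (hM.dom (L n)), psi_coe f hbot hk1.1, ← EReal.coe_add,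
        EReal.coe_lt_coe_iff] at h0
      have : δ * (γ (L n) / τ) / 2 * ‖xh n - x (L n)‖ ^ 2 = δ * γh n / 2 * ‖dh n‖ ^ 2 := by
        simp [hγhdef, hdhdef]
      linarith [h0, this.le, this.ge]
    -- combine
    have hcomb : (1 - δ) * γh n / 2 * ‖dh n‖ ^ 2
        < f (xh n) - f (x (L n)) - ⟪gradient f (x (L n)), dh n⟫ := by
      nlinarith [hk1.2, hfailr]
    have hfin : γh n * ‖dh n‖ < ρ / 2 := by
      have h0 : (1 - δ) * γh n / 2 * ‖dh n‖ ^ 2 < ρ' * ‖dh n‖ := lt_of_lt_of_le hcomb hmvt'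
      rw [hρ'def] at h0
      by_contra hge2
      push_neg at hge2
      have hpos : (0:ℝ) < (1 - δ) * ‖dh n‖ := mul_pos (by linarith) hd0
      have hmm := mul_le_mul_of_nonneg_left hge2 hpos.le
      nlinarith [h0, hmm]
    linarith
  -- final contradiction
  have hev1 : ∀ᶠ n in atTop, ε ≤ τ * (γh n * ‖dh n‖) := by
    filter_upwards [hc2] with n hn
    have h0 : γ (L n) * ‖d n‖ ≤ γ (L n) * ‖dh n‖ :=
      mul_le_mul_of_nonneg_left hn (hγpos _).le
    have h1' : τ * (γh n * ‖dh n‖) = γ (L n) * ‖dh n‖ := by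
      simp only [hγhdef]
      field_simp
    linarith [h1 n, h1'.le, h1'.ge]
  have hev2 : ∀ᶠ n in atTop, τ * (γh n * ‖dh n‖) < ε := by
    have : Tendsto (fun n => τ * (γh n * ‖dh n‖)) atTop (𝓝 0) := by
      simpa using hc4.const_mul τ
    exact this.eventually_lt_const hε
  obtain ⟨n, hn1, hn2⟩ := (hev1.and hev2).exists
  linarith
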